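/- Let X be a Lefschetz complex over a ring R with unity, let 𝒱 be a multivector field on X with X invariant, and let 𝓜 = {M_r : r ∈ ℙ} be a Morse decomposition of X. If I is a lower set in ℙ (i.e. r′ ≤ r and r ∈ I imply r′ ∈ I), then the Morse set M(I) is an attractor in X. -/

import Mathlib

open scoped Classical

namespace CMVF

variable {R : Type*} [Ring R] {X : Type*} [Fintype X]

/-- A Lefschetz complex over `R` with cells `X`. -/
structure Lefschetz (R : Type*) [Ring R] (X : Type*) [Fintype X] where
  dim : X → ℕ
  κ : X → X → R
  dim_facet : ∀ x y, κ x y ≠ 0 → dim x = dim y + 1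
  κ_sq : ∀ x z, (∑ y : X, κ x y * κ y z) = 0

namespace Lefschetz

variable (L : Lefschetz R X)

/-- The face order `y ≤κ x` : the partial order generated by the facet relation. -/
def le (y x : X) : Prop := Relation.ReflTransGen (fun a b => L.κ b a ≠ 0) y x

/-- Closure of a set of cells: all faces of cells of `A`. -/
def cls (A : Set X) : Set X := {z | ∃ a ∈ A, L.le z a}

/-- Closure of a single cell. -/
def clPt (x : X) : Set X := L.cls {x}

/-- The minimal open set containing `x`. -/
def opn (x : X) : Set X := {z | L.le x z}

/-- `A` is closed. -/
def Closed (A : Set X) : Prop := L.cls A = A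

/-- The mouth of `A`. -/
def mo (A : Set X) : Set X := L.cls A \ A

/-- `A` is proper: its mouth is closed. -/
def Proper (A : Set X) : Prop := L.Closed (L.mo A)

/-- Relative closure within an ambient subcomplex `W`. -/
def clsIn (W A : Set X) : Set X := L.cls A ∩ W

/-- Relative mouth within an ambient subcomplex `W`. -/
def moIn (W A : Set X) : Set X := L.clsIn W A \ A

/-- The boundary operator of the subcomplex determined by `A`
(`∂ x = ∑ y ∈ A, κ x y • y` for `x ∈ A`). -/
noncomputable def bd (A : Set X) : (X → R) →ₗ[R] (X → R) where
  toFun f := fun y => if y ∈ A then ∑ x : X, (if x ∈ A then f x * L.κ x y else 0) else 0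
  map_add' f g := by
    funext y
    by_cases hy : y ∈ A
    · simp only [hy, if_true, Pi.add_apply]
      rw [← Finset.sum_add_distrib]
      refine Finset.sum_congr rfl fun x _ => ?_
      by_cases hx : x ∈ A <;> simp [hx, add_mul]
    · simp [hy]
  map_smul' r f := by
    funext y
    by_cases hy : y ∈ A
    · simp only [hy, if_true, Pi.smul_apply, smul_eq_mul, RingHom.id_apply]
      rw [Finset.mul_sum]
      refine Finset.sum_congr rfl fun x _ => ?_
      by_cases hx : x ∈ A <;> simp [hx, mul_assoc]
    · simp [hy]

/-- The `n`-chains of the subcomplex determined by `A`. -/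
noncomputable def chainGroup (A : Set X) (n : ℕ) : Submodule R (X → R) :=
  Submodule.span R {f | ∃ x ∈ A, L.dim x = n ∧ f = Pi.single x 1}

/-- The `n`-cycles of the subcomplex determined by `A`. -/
noncomputable def cycles (A : Set X) (n : ℕ) : Submodule R (X → R) :=
  L.chainGroup A n ⊓ LinearMap.ker (L.bd A)

/-- The `n`-boundaries of the subcomplex determined by `A`. -/
noncomputable def boundaries (A : Set X) (n : ℕ) : Submodule R (X → R) :=
  (L.chainGroup A (n + 1)).map (L.bd A)

/-- The Lefschetz homology `H^κ_n(A)` of the subcomplex determined by `A`. -/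
noncomputable def homology (A : Set X) (n : ℕ) : Type _ :=
  (L.cycles A n) ⧸ ((L.boundaries A n).comap (L.cycles A n).subtype)

noncomputable instance homologyAddCommGroup (A : Set X) (n : ℕ) :
    AddCommGroup (L.homology A n) :=
  inferInstanceAs (AddCommGroup
    ((L.cycles A n) ⧸ ((L.boundaries A n).comap (L.cycles A n).subtype)))

noncomputable instance homologyModule (A : Set X) (n : ℕ) :
    Module R (L.homology A n) :=
  inferInstanceAs (Module R
    ((L.cycles A n) ⧸ ((L.boundaries A n).comap (L.cycles A n).subtype)))

/-- `A` is a zero space: its Lefschetz homology vanishes. -/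
def HomologyZero (A : Set X) : Prop := ∀ n, Subsingleton (L.homology A n)

/-- The Poincaré polynomial `p_A(t) = ∑ rank H^κ_n(A) tⁿ`. -/
noncomputable def poincare (A : Set X) : Polynomial ℕ :=
  ∑ n ∈ Finset.image L.dim Finset.univ,
    Polynomial.C (Module.finrank R (L.homology A n)) * Polynomial.X ^ n

/-- `V` is a multivector: proper, with a unique maximal element. -/
def IsMV (V : Set X) : Prop :=
  L.Proper V ∧ ∃! m, m ∈ V ∧ ∀ x ∈ V, L.le x m

/-- A regular multivector: one with vanishing Lefschetz homology. -/
def Regular (V : Set X) : Prop := L.HomologyZero V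

end Lefschetz

/-- A combinatorial multivector field on a Lefschetz complex: a partition into multivectors. -/
structure MVField {R : Type*} [Ring R] {X : Type*} [Fintype X] (L : Lefschetz R X) where
  mvs : Set (Set X)
  isMV : ∀ V ∈ mvs, L.IsMV V
  cover : ∀ x : X, ∃! V, V ∈ mvs ∧ x ∈ V

namespace MVField

variable {L : Lefschetz R X} (F : MVField L)

/-- `[x]` : the multivector containing `x`. -/
noncomputable def mclass (x : X) : Set X := (F.cover x).exists.choose

lemma mclass_spec (x : X) : F.mclass x ∈ F.mvs ∧ x ∈ F.mclass x :=
  (F.cover x).exists.choose_spec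

/-- `x★` : the dominant cell of the multivector containing `x`. -/
noncomputable def star (x : X) : X :=
  ((F.isMV _ (F.mclass_spec x).1).2).exists.choose

/-- `[x]°` : the regular part of the multivector of `x`. -/
noncomputable def regPart (x : X) : Set X :=
  if L.Regular (F.mclass x) then F.mclass x else F.mclass x \ {F.star x}

/-- The multivalued map `Π_𝒱`. -/
noncomputable def Pi (x : X) : Set X :=
  if x = F.star x then L.clPt x \ F.regPart x else {F.star x}

/-- The multivalued map of the multivector field restricted to the subcomplex `W`. -/
noncomputable def PiIn (W : Set X) (x : X) : Set X := F.Pi x ∩ W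

/-- `φ : ℤ → X` is a full solution of the multivector field restricted to `W`. -/
def IsSolIn (W : Set X) (φ : ℤ → X) : Prop := ∀ i, φ (i + 1) ∈ F.PiIn W (φ i)

/-- There is a full solution (of the field restricted to `W`) through `x` with values in `A`. -/
def FullSolThroughIn (W : Set X) (x : X) (A : Set X) : Prop :=
  ∃ φ : ℤ → X, F.IsSolIn W φ ∧ (∃ i, φ i = x) ∧ ∀ i, φ i ∈ A

/-- `A` is `𝒱`-compatible. -/
def Compat (A : Set X) : Prop := ∀ x ∈ A, F.mclass x ⊆ A

/-- `[A]⁻` : the maximal `𝒱`-compatible subset of `A`. -/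
def lowerC (A : Set X) : Set X := {x ∈ A | F.mclass x ⊆ A}

/-- `[A]⁺` : the minimal `𝒱`-compatible superset of `A`. -/
def upperC (A : Set X) : Set X := ⋃ x ∈ A, F.mclass x

/-- `Inv A`, the invariant part of `A`, computed in the subcomplex `W`. -/
def InvPartIn (W A : Set X) : Set X :=
  {x ∈ A | F.FullSolThroughIn W (F.star x) (F.lowerC A)}

/-- `A` is invariant (within the subcomplex `W`). -/
def InvariantIn (W A : Set X) : Prop := F.InvPartIn W A = A

/-- `φ` is a path (solution) on the integer interval `[a,b]`, within the subcomplex `W`. -/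
def IsPathOnIn (W : Set X) (a b : ℤ) (φ : ℤ → X) : Prop :=
  ∀ i, a ≤ i → i < b → φ (i + 1) ∈ F.PiIn W (φ i)

/-- `S` admits an internal tangency within the subcomplex `W`. -/
def HasInternalTangencyIn (W S : Set X) : Prop :=
  ∃ (a b : ℤ) (φ : ℤ → X), a ≤ b ∧ F.IsPathOnIn W a b φ ∧
    (∀ i, a ≤ i → i ≤ b → φ i ∈ L.clsIn W S) ∧ φ a ∈ S ∧ φ b ∈ S ∧
    ∃ i, a ≤ i ∧ i ≤ b ∧ φ i ∈ L.moIn W S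

/-- `S` is an isolated invariant set within the subcomplex `W`. -/
def IsoInvIn (W S : Set X) : Prop :=
  F.InvariantIn W S ∧ ¬ F.HasInternalTangencyIn W S

/-- `N` is a trapping region within the subcomplex `W`. -/
def TrappingIn (W N : Set X) : Prop :=
  N ⊆ W ∧ F.Compat N ∧ ∀ x ∈ N, F.PiIn W x ⊆ N

/-- `N` is a backward trapping region within the subcomplex `W`. -/
def BackTrappingIn (W N : Set X) : Prop :=
  N ⊆ W ∧ F.Compat N ∧ ∀ x ∈ W, ∀ y ∈ F.PiIn W x, y ∈ N → x ∈ N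

/-- `A` is an attractor within the subcomplex `W`. -/
def AttractorIn (W A : Set X) : Prop :=
  ∃ N, F.TrappingIn W N ∧ A = F.InvPartIn W N

/-- `A` is a repeller within the subcomplex `W`. -/
def RepellerIn (W A : Set X) : Prop :=
  ∃ N, F.BackTrappingIn W N ∧ A = F.InvPartIn W N

/-- The α-limit set of a full solution `φ`. -/
def alphaIn (W : Set X) (φ : ℤ → X) : Set X :=
  ⋂ k : ℕ, F.InvPartIn W (F.upperC (φ '' {i : ℤ | i ≤ -(k : ℤ)}))

/-- The ω-limit set of a full solution `φ`. -/
def omegaIn (W : Set X) (φ : ℤ → X) : Set X :=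
  ⋂ k : ℕ, F.InvPartIn W (F.upperC (φ '' {i : ℤ | (k : ℤ) ≤ i}))

/-- `C(A',A)` : the set of cells lying on connections running from `A'` to `A`. -/
def ConnIn (W A' A : Set X) : Set X :=
  {x | ∃ φ : ℤ → X, F.IsSolIn W φ ∧ (∃ i, φ i = F.star x) ∧
        F.alphaIn W φ ⊆ A' ∧ F.omegaIn W φ ⊆ A}

/-- `(A, Rp)` is an attractor-repeller pair in the subcomplex `W`. -/
def ARPairIn (W A Rp : Set X) : Prop :=
  F.AttractorIn W A ∧ F.RepellerIn W Rp ∧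
    A = F.InvPartIn W (W \ Rp) ∧ Rp = F.InvPartIn W (W \ A)

/-- `M` is a Morse decomposition of the subcomplex `W`, with admissible order `le`. -/
def MorseDecompIn (W : Set X) {P : Type*} [Finite P] (le : P → P → Prop)
    (M : P → Set X) : Prop :=
  IsPartialOrder P le ∧
  (∀ r, F.IsoInvIn W (M r)) ∧
  (∀ r r', r ≠ r' → Disjoint (M r) (M r')) ∧
  (∀ φ : ℤ → X, F.IsSolIn W φ →
    ∃ r r', le r r' ∧ F.alphaIn W φ ⊆ M r' ∧ F.omegaIn W φ ⊆ M r) ∧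
  (∀ φ : ℤ → X, F.IsSolIn W φ → ∀ r,
    F.alphaIn W φ ⊆ M r → F.omegaIn W φ ⊆ M r → Set.range φ ⊆ M r)

/-- The Morse set `M(I)` of a family of sets indexed by `I ⊆ P`. -/
def MorseSetIn (W : Set X) {P : Type*} (M : P → Set X) (I : Set P) : Set X :=
  ⋃ r ∈ I, ⋃ r' ∈ I, F.ConnIn W (M r') (M r)

/-- `(P₁, P₂)` is an index pair for the isolated invariant set `S`. -/
def IndexPair (S P₁ P₂ : Set X) : Prop :=
  L.Closed P₁ ∧ L.Closed P₂ ∧ P₂ ⊆ P₁ ∧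
  (∀ x ∈ P₂, ∀ y ∈ F.Pi x, y ∈ P₁ → y ∈ P₂) ∧
  (∀ x ∈ P₁, (∃ y ∈ F.Pi x, y ∉ P₁) → x ∈ P₂) ∧
  S = F.InvPartIn Set.univ (P₁ \ P₂)

/-- `x ⤳_A y` : there is a path of length at least two in `A` from `x★` to `y★`. -/
def PathConn (A : Set X) (x y : X) : Prop :=
  ∃ (a b : ℤ) (φ : ℤ → X), a < b ∧
    (∀ i, a ≤ i → i < b → φ (i + 1) ∈ F.Pi (φ i)) ∧
    (∀ i, a ≤ i → i ≤ b → φ i ∈ A) ∧ φ a = F.star x ∧ φ b = F.star y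

/-- The chain recurrent set. -/
def CR : Set X := {x | F.PathConn Set.univ x x}

/-- `B` is a basic set: an equivalence class of mutual connectedness in `CR`. -/
def IsBasicSet (B : Set X) : Prop :=
  ∃ x ∈ F.CR, B = {y ∈ F.CR | F.PathConn Set.univ x y ∧ F.PathConn Set.univ y x}

/-- The set `E_P` of cells of `P₁` all of whose forward solutions meet `P₂`. -/
def Ep (P₁ P₂ : Set X) : Set X :=
  {x ∈ P₁ | ∀ φ : ℕ → X, φ 0 = x → (∀ i, φ (i + 1) ∈ F.Pi (φ i)) → ∃ i, φ i ∈ P₂}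

/-- The preorder `≤_𝒱` induced by the arrows of the multivector field. -/
def leV : X → X → Prop := Relation.ReflTransGen (fun y x => y ∈ F.Pi x)

/-- The multivector field is acyclic: `≤_𝒱` is a partial order. -/
def Acyclic : Prop := ∀ x y, F.leV x y → F.leV y x → x = y

end MVField

end CMVF

open CMVF

namespace CMVF
namespace MVField

variable {R : Type*} [Ring R] {X : Type*} [Fintype X] {L : Lefschetz R X} (F : MVField L)

lemma mem_mclass (x : X) : x ∈ F.mclass x := (F.mclass_spec x).2

lemma mclass_mem (x : X) : F.mclass x ∈ F.mvs := (F.mclass_spec x).1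

lemma mclass_eq_of_mem {x z : X} (h : z ∈ F.mclass x) : F.mclass z = F.mclass x :=
  (F.cover z).unique ⟨F.mclass_mem z, F.mem_mclass z⟩ ⟨F.mclass_mem x, h⟩

lemma star_spec (x : X) :
    F.star x ∈ F.mclass x ∧ ∀ y ∈ F.mclass x, L.le y (F.star x) :=
  ((F.isMV _ (F.mclass_spec x).1).2).exists.choose_spec

lemma star_unique {x m : X} (h1 : m ∈ F.mclass x)
    (h2 : ∀ y ∈ F.mclass x, L.le y m) : m = F.star x :=
  ((F.isMV _ (F.mclass_spec x).1).2).unique ⟨h1, h2⟩ ⟨(F.star_spec x).1, (F.star_spec x).2⟩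

lemma star_eq_of_mem {x z : X} (h : z ∈ F.mclass x) : F.star z = F.star x := by
  have hm := F.mclass_eq_of_mem h
  refine (F.star_unique (x := z) ?_ ?_).symm
  · rw [hm]; exact (F.star_spec x).1
  · rw [hm]; exact (F.star_spec x).2

lemma star_star (x : X) : F.star (F.star x) = F.star x :=
  F.star_eq_of_mem (F.star_spec x).1

lemma piIn_univ (x : X) : F.PiIn Set.univ x = F.Pi x := by
  simp [PiIn]

lemma sol_star {φ : ℤ → X} (hφ : F.IsSolIn Set.univ φ) (i : ℤ) :
    ∃ j, φ j = F.star (φ i) := by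
  by_cases h : φ i = F.star (φ i)
  · exact ⟨i, h⟩
  · refine ⟨i + 1, ?_⟩
    have h2 := hφ i
    rw [F.piIn_univ, MVField.Pi, if_neg h] at h2
    exact h2

lemma subset_upperC (A : Set X) : A ⊆ F.upperC A :=
  fun x hx => Set.mem_biUnion hx (F.mem_mclass x)

lemma mclass_subset_upperC {A : Set X} {x : X} (hx : x ∈ A) :
    F.mclass x ⊆ F.upperC A := fun z hz => Set.mem_biUnion hx hz

lemma compat_subset {A C : Set X} (hC : F.Compat C) (h : A ⊆ C) :
    F.upperC A ⊆ C := by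
  intro z hz
  rcases Set.mem_iUnion₂.mp hz with ⟨x, hx, hzx⟩
  exact hC x (h hx) hzx

lemma upperC_mono {A B : Set X} (h : A ⊆ B) : F.upperC A ⊆ F.upperC B := by
  intro z hz
  rcases Set.mem_iUnion₂.mp hz with ⟨x, hx, hzx⟩
  exact Set.mem_biUnion (h hx) hzx

lemma lowerC_mono {A B : Set X} (h : A ⊆ B) : F.lowerC A ⊆ F.lowerC B :=
  fun x hx => ⟨h hx.1, hx.2.trans h⟩

lemma lowerC_eq {C : Set X} (hC : F.Compat C) : F.lowerC C = C := by
  ext x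
  exact ⟨fun h => h.1, fun h => ⟨h, hC x h⟩⟩

lemma invPart_subset (W A : Set X) : F.InvPartIn W A ⊆ A := fun x hx => hx.1

lemma invPart_mono (W : Set X) {A B : Set X} (h : A ⊆ B) :
    F.InvPartIn W A ⊆ F.InvPartIn W B := by
  rintro x ⟨hxA, φ, hsol, hi, hval⟩
  exact ⟨h hxA, φ, hsol, hi, fun i => F.lowerC_mono h (hval i)⟩

lemma invariant_compat {S : Set X} (hS : F.InvariantIn Set.univ S) : F.Compat S := by
  intro x hx
  have hx' : x ∈ F.InvPartIn Set.univ S := by rw [hS]; exact hx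
  obtain ⟨-, φ, hsol, ⟨i, hi⟩, hval⟩ := hx'
  have h1 : F.star x ∈ F.lowerC S := hi ▸ hval i
  have h2 : F.mclass (F.star x) ⊆ S := h1.2
  rwa [F.mclass_eq_of_mem ((F.star_spec x).1)] at h2

end MVField
end CMVF

namespace CMVF
namespace MVField

variable {R : Type*} [Ring R] {X : Type*} [Fintype X] {L : Lefschetz R X} (F : MVField L)

lemma splice_sol {φ ψ : ℤ → X} (hφ : F.IsSolIn Set.univ φ) (hψ : F.IsSolIn Set.univ ψ)
    {a b : ℤ} (h : φ a = ψ b) :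
    F.IsSolIn Set.univ (fun n => if n ≤ a then φ n else ψ (n - a + b)) := by
  intro n
  show (if n + 1 ≤ a then φ (n + 1) else ψ (n + 1 - a + b)) ∈
    F.PiIn Set.univ (if n ≤ a then φ n else ψ (n - a + b))
  by_cases h1 : n + 1 ≤ a
  · rw [if_pos h1, if_pos (by omega : n ≤ a)]
    exact hφ n
  · by_cases h2 : n ≤ a
    · have hna : n = a := by omega
      subst hna
      rw [if_neg h1, if_pos h2, show n + 1 - n + b = b + 1 by ring, h]
      exact hψ b
    · rw [if_neg h1, if_neg h2, show n + 1 - a + b = (n - a + b) + 1 by ring]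
      exact hψ (n - a + b)

lemma extend_sol {φ τ : ℤ → X} (hφ : F.IsSolIn Set.univ φ) (hτ : F.IsSolIn Set.univ τ)
    {x y : X} {a c : ℤ} (ha : φ a = x) (hy : y ∈ F.Pi x) (hc : τ c = F.star y) :
    ∃ σ, F.IsSolIn Set.univ σ ∧ (∀ n ≤ a, σ n = φ n) ∧ (∃ j, σ j = F.star y) := by
  by_cases hys : y = F.star y
  · refine ⟨fun n => if n ≤ a then φ n else τ (n - (a + 1) + c), ?_, ?_, ⟨a + 1, ?_⟩⟩
    · intro n
      show (if n + 1 ≤ a then φ (n + 1) else τ (n + 1 - (a + 1) + c)) ∈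
        F.PiIn Set.univ (if n ≤ a then φ n else τ (n - (a + 1) + c))
      by_cases h1 : n + 1 ≤ a
      · rw [if_pos h1, if_pos (by omega : n ≤ a)]
        exact hφ n
      · by_cases h2 : n ≤ a
        · have hna : n = a := by omega
          subst hna
          rw [if_neg h1, if_pos h2, show n + 1 - (n + 1) + c = c by ring, hc, ← hys, ha,
            F.piIn_univ]
          exact hy
        · rw [if_neg h1, if_neg h2,
            show n + 1 - (a + 1) + c = (n - (a + 1) + c) + 1 by ring]
          exact hτ (n - (a + 1) + c)
    · intro n hn; exact if_pos hn
    · show (if a + 1 ≤ a then φ (a + 1) else τ (a + 1 - (a + 1) + c)) = F.star y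
      rw [if_neg (by omega : ¬ a + 1 ≤ a), show a + 1 - (a + 1) + c = c by ring, hc]
  · refine ⟨fun n => if n ≤ a then φ n else if n = a + 1 then y else τ (n - (a + 2) + c),
      ?_, ?_, ⟨a + 2, ?_⟩⟩
    · intro n
      show (if n + 1 ≤ a then φ (n + 1) else if n + 1 = a + 1 then y
          else τ (n + 1 - (a + 2) + c)) ∈
        F.PiIn Set.univ (if n ≤ a then φ n else if n = a + 1 then y
          else τ (n - (a + 2) + c))
      by_cases h1 : n + 1 ≤ a
      · rw [if_pos h1, if_pos (by omega : n ≤ a)]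
        exact hφ n
      · by_cases h2 : n ≤ a
        · have hna : n = a := by omega
          subst hna
          rw [if_neg h1, if_pos h2, if_pos (by omega : n + 1 = n + 1), ha, F.piIn_univ]
          exact hy
        · by_cases h3 : n = a + 1
          · subst h3
            rw [if_neg h1, if_neg h2, if_pos rfl,
              if_neg (by omega : ¬ a + 1 + 1 = a + 1),
              show a + 1 + 1 - (a + 2) + c = c by ring, hc, F.piIn_univ, MVField.Pi,
              if_neg hys]
            rfl
          · rw [if_neg h1, if_neg h2, if_neg h3,
              if_neg (by omega : ¬ n + 1 = a + 1),
              show n + 1 - (a + 2) + c = (n - (a + 2) + c) + 1 by ring]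
            exact hτ (n - (a + 2) + c)
    · intro n hn; exact if_pos hn
    · show (if a + 2 ≤ a then φ (a + 2) else if a + 2 = a + 1 then y
          else τ (a + 2 - (a + 2) + c)) = F.star y
      rw [if_neg (by omega : ¬ a + 2 ≤ a), if_neg (by omega : ¬ a + 2 = a + 1),
        show a + 2 - (a + 2) + c = c by ring, hc]

lemma alpha_eq_of_eventually {σ φ : ℤ → X} {T : ℤ} (h : ∀ n ≤ T, σ n = φ n) :
    F.alphaIn Set.univ σ = F.alphaIn Set.univ φ := by
  have key : ∀ (ρ η : ℤ → X), (∀ n ≤ T, ρ n = η n) →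
      F.alphaIn Set.univ ρ ⊆ F.alphaIn Set.univ η := by
    intro ρ η hρη z hz
    simp only [alphaIn, Set.mem_iInter] at hz ⊢
    intro k
    have hz' := hz (k + T.natAbs)
    have himg : ρ '' {i : ℤ | i ≤ -((k + T.natAbs : ℕ) : ℤ)}
        = η '' {i : ℤ | i ≤ -((k + T.natAbs : ℕ) : ℤ)} := by
      apply Set.image_congr
      intro i hi
      exact hρη i (by simp only [Set.mem_setOf_eq] at hi; omega)
    rw [himg] at hz'
    refine F.invPart_mono _ (F.upperC_mono (Set.image_mono ?_)) hz'
    intro i hi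
    simp only [Set.mem_setOf_eq] at hi ⊢
    omega
  exact Set.Subset.antisymm (key σ φ h) (key φ σ fun n hn => (h n hn).symm)

lemma omega_subset (φ : ℤ → X) (m : ℤ) :
    F.omegaIn Set.univ φ ⊆
      F.InvPartIn Set.univ (F.upperC (φ '' {i : ℤ | m ≤ i})) := by
  intro z hz
  have h1 := Set.mem_iInter.mp hz m.toNat
  refine F.invPart_mono _ (F.upperC_mono (Set.image_mono ?_)) h1
  intro i hi
  simp only [Set.mem_setOf_eq] at hi ⊢
  omega

end MVField
end CMVF

namespace CMVF
namespace MVField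

variable {R : Type*} [Ring R] {X : Type*} [Fintype X] {L : Lefschetz R X} (F : MVField L)

lemma limit_nonempty {φ : ℤ → X} (hφ : F.IsSolIn Set.univ φ) (g : ℕ → Set ℤ)
    (hmono : ∀ k l : ℕ, k ≤ l → g l ⊆ g k)
    (hconv : ∀ (k : ℕ) (i j n : ℤ), i ∈ g k → j ∈ g k → i ≤ n → n ≤ j → n ∈ g k)
    (hinf : ∀ k, (g k).Infinite) :
    ∃ z, ∀ k, z ∈ F.InvPartIn Set.univ (F.upperC (φ '' g k)) := by
  classical
  -- stabilization
  have hx : ∀ x : X, ∃ kx : ℕ, x ∉ (⋂ k, φ '' g k) → x ∉ φ '' g kx := by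
    intro x
    by_cases hx : x ∈ ⋂ k, φ '' g k
    · exact ⟨0, fun h => absurd hx h⟩
    · simp only [Set.mem_iInter, not_forall] at hx
      obtain ⟨k, hk⟩ := hx
      exact ⟨k, fun _ => hk⟩
  choose kf hkf using hx
  set K : ℕ := Finset.univ.sup kf with hKdef
  have hK : φ '' g K ⊆ ⋂ k, φ '' g k := by
    intro x hxK
    by_contra hxB
    exact hkf x hxB
      ((Set.image_mono (hmono _ _ (Finset.le_sup (Finset.mem_univ x)))) hxK)
  -- pigeonhole
  obtain ⟨i0, hi0, j0, hj0, hne, heq0⟩ :=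
    (hinf K).exists_ne_map_eq_of_mapsTo (Set.mapsTo_univ φ _) Set.finite_univ
  -- main argument for i < j
  have main : ∀ i j : ℤ, i ∈ g K → j ∈ g K → i < j → φ i = φ j →
      ∃ z, ∀ k, z ∈ F.InvPartIn Set.univ (F.upperC (φ '' g k)) := by
    intro i j hi hj hij heq
    set p : ℤ := j - i with hpdef
    have hp0 : 0 < p := by omega
    set ρ : ℤ → X := fun n => φ (i + (n - i) % p) with hρdef
    have hρ_mem : ∀ n : ℤ, ∃ m : ℤ, i ≤ m ∧ m ≤ j ∧ ρ n = φ m := by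
      intro n
      refine ⟨i + (n - i) % p, ?_, ?_, rfl⟩
      · have := Int.emod_nonneg (n - i) (by omega : p ≠ 0)
        omega
      · have := Int.emod_lt_of_pos (n - i) hp0
        omega
    have hkey : ∀ n : ℤ, (n + 1 - i) % p = ((n - i) % p + 1) % p := by
      intro n
      conv_lhs => rw [show n + 1 - i = (n - i) % p + 1 + p * ((n - i) / p) by
        have := Int.emod_add_mul_ediv (n - i) p
        linarith]
      exact Int.add_mul_emod_self_left ((n - i) % p + 1) p ((n - i) / p)
    have hρ_sol : F.IsSolIn Set.univ ρ := by
      intro n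
      have h0 : 0 ≤ (n - i) % p := Int.emod_nonneg _ (by omega)
      have h1 : (n - i) % p < p := Int.emod_lt_of_pos _ hp0
      by_cases hr : (n - i) % p = p - 1
      · have h2 : ρ (n + 1) = φ i := by
          show φ (i + (n + 1 - i) % p) = φ i
          rw [hkey n, hr, show p - 1 + 1 = p by ring, Int.emod_self, add_zero]
        have h3 : ρ n = φ (j - 1) := by
          show φ (i + (n - i) % p) = φ (j - 1)
          rw [hr]
          congr 1
          omega
        rw [h2, h3, heq]
        have h4 := hφ (j - 1)
        rwa [show j - 1 + 1 = j by ring] at h4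
      · have h2 : ρ (n + 1) = φ (i + (n - i) % p + 1) := by
          show φ (i + (n + 1 - i) % p) = φ (i + (n - i) % p + 1)
          rw [hkey n, Int.emod_eq_of_lt (by omega) (by omega)]
          congr 1
          ring
        have h3 := hφ (i + (n - i) % p)
        rw [h2]
        exact h3
    have hval : ∀ (n : ℤ) (k : ℕ), ρ n ∈ φ '' g k := by
      intro n k
      obtain ⟨m, hmi, hmj, hm⟩ := hρ_mem n
      have hmK : m ∈ g K := hconv K i j m hi hj hmi hmj
      have : φ m ∈ ⋂ k, φ '' g k := hK ⟨m, hmK, rfl⟩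
      rw [hm]
      exact Set.mem_iInter.mp this k
    refine ⟨ρ 0, fun k => ?_⟩
    refine ⟨F.subset_upperC _ (hval 0 k), ρ, hρ_sol, F.sol_star hρ_sol 0, fun n => ?_⟩
    exact ⟨F.subset_upperC _ (hval n k),
      (F.mclass_subset_upperC (hval n k) : F.mclass (ρ n) ⊆ _)⟩
  rcases lt_or_gt_of_ne hne with h | h
  · exact main i0 j0 hi0 hj0 h heq0
  · exact main j0 i0 hj0 hi0 h heq0.symm

lemma alpha_nonempty {φ : ℤ → X} (hφ : F.IsSolIn Set.univ φ) :
    (F.alphaIn Set.univ φ).Nonempty := by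
  obtain ⟨z, hz⟩ := F.limit_nonempty hφ (fun k => {i : ℤ | i ≤ -(k : ℤ)})
    (fun k l hkl i hi => by simp only [Set.mem_setOf_eq] at hi ⊢; omega)
    (fun k i j n hi hj hin hnj => by simp only [Set.mem_setOf_eq] at hi hj ⊢; omega)
    (fun k => Set.infinite_of_injective_forall_mem
      (f := fun n : ℕ => -(k : ℤ) - (n : ℤ))
      (fun a b hab => by simp only at hab; omega)
      (fun a => by simp only [Set.mem_setOf_eq]; omega))
  exact ⟨z, Set.mem_iInter.mpr hz⟩

lemma omega_nonempty {φ : ℤ → X} (hφ : F.IsSolIn Set.univ φ) :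
    (F.omegaIn Set.univ φ).Nonempty := by
  obtain ⟨z, hz⟩ := F.limit_nonempty hφ (fun k => {i : ℤ | (k : ℤ) ≤ i})
    (fun k l hkl i hi => by simp only [Set.mem_setOf_eq] at hi ⊢; omega)
    (fun k i j n hi hj hin hnj => by simp only [Set.mem_setOf_eq] at hi hj ⊢; omega)
    (fun k => Set.infinite_of_injective_forall_mem
      (f := fun n : ℕ => (k : ℤ) + (n : ℤ))
      (fun a b hab => by simp only at hab; omega)
      (fun a => by simp only [Set.mem_setOf_eq]; omega))
  exact ⟨z, Set.mem_iInter.mpr hz⟩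

end MVField
end CMVF


variable {R : Type*} [Ring R] {X : Type*} [Fintype X]

/-- Theorem: if `I` is a lower set in `ℙ`, then the Morse set `M(I)` is an attractor. -/
theorem morse_set_attractor (L : Lefschetz R X) (F : MVField L)
    (hX : F.InvariantIn Set.univ Set.univ)
    {P : Type*} [Finite P] (le : P → P → Prop) (M : P → Set X)
    (hM : F.MorseDecompIn Set.univ le M) (I : Set P)
    (hI : ∀ r' r, le r' r → r ∈ I → r' ∈ I) :
    F.AttractorIn Set.univ (F.MorseSetIn Set.univ M I) := by
  classical
  obtain ⟨hpo, hiso, hdisj, hax4, hax5⟩ := hM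
  -- the trapping region
  set N : Set X := {x | ∃ φ : ℤ → X, F.IsSolIn Set.univ φ ∧ (∃ i, φ i = F.star x) ∧
    ∃ r' ∈ I, F.alphaIn Set.univ φ ⊆ M r'} with hNdef
  have hNcompat : F.Compat N := by
    intro x hx z hz
    obtain ⟨φ, h1, ⟨i, hi⟩, h3⟩ := hx
    exact ⟨φ, h1, ⟨i, by rw [F.star_eq_of_mem hz]; exact hi⟩, h3⟩
  have hNl : F.lowerC N = N := F.lowerC_eq hNcompat
  have hXfull : ∀ z : X, ∃ τ : ℤ → X, F.IsSolIn Set.univ τ ∧ ∃ c, τ c = F.star z := by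
    intro z
    have hz : z ∈ F.InvPartIn Set.univ Set.univ := by rw [hX]; trivial
    obtain ⟨-, τ, h1, h2, -⟩ := hz
    exact ⟨τ, h1, h2⟩
  have htrap : F.TrappingIn Set.univ N := by
    refine ⟨Set.subset_univ _, hNcompat, ?_⟩
    intro x hx y hy
    rw [F.piIn_univ] at hy
    obtain ⟨φ, hsol, ⟨a, ha⟩, r', hr'I, hα⟩ := hx
    by_cases hxs : x = F.star x
    · obtain ⟨τ, hτ, c, hc⟩ := hXfull y
      obtain ⟨σ, hσ, hagree, j, hj⟩ :=
        F.extend_sol hsol hτ (ha.trans hxs.symm) hy hc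
      exact ⟨σ, hσ, ⟨j, hj⟩, r', hr'I, by
        rw [F.alpha_eq_of_eventually hagree]; exact hα⟩
    · have hy' : y = F.star x := by
        rw [MVField.Pi, if_neg hxs] at hy
        exact hy
      refine ⟨φ, hsol, ⟨a, ?_⟩, r', hr'I, hα⟩
      rw [hy', F.star_star]
      exact ha
  refine ⟨N, htrap, Set.Subset.antisymm ?_ ?_⟩
  · -- M(I) ⊆ Inv N
    intro x hx
    simp only [MVField.MorseSetIn, MVField.ConnIn, Set.mem_iUnion, Set.mem_setOf_eq] at hx
    obtain ⟨r, hrI, r', hr'I, φ, hφ, ⟨a, ha⟩, hα, hω⟩ := hx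
    have hxN : x ∈ N := ⟨φ, hφ, ⟨a, ha⟩, r', hr'I, hα⟩
    refine ⟨hxN, φ, hφ, ⟨a, ha⟩, fun i => ?_⟩
    rw [hNl]
    exact ⟨φ, hφ, F.sol_star hφ i, r', hr'I, hα⟩
  · -- Inv N ⊆ M(I)
    intro x hx
    obtain ⟨hxN, ψ, hψ, ⟨a, ha⟩, hval⟩ := hx
    have hvalN : ∀ i, ψ i ∈ N := fun i => by
      have := hval i; rwa [hNl] at this
    obtain ⟨s, s', hss', hα, hω⟩ := hax4 ψ hψ
    obtain ⟨z, hz⟩ := F.alpha_nonempty hψ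
    have hzN : z ∈ N := by
      have h1 := Set.mem_iInter.mp hz 0
      have h2 := F.invPart_subset _ _ h1
      refine F.compat_subset hNcompat ?_ h2
      rintro w ⟨i, -, rfl⟩
      exact hvalN i
    have hzM : z ∈ M s' := hα hz
    obtain ⟨σ, hσ, ⟨a1, ha1⟩, t', ht'I, hασ⟩ := hzN
    have hinv : F.InvariantIn Set.univ (M s') := (hiso s').1
    have hz2 : z ∈ F.InvPartIn Set.univ (M s') := by rw [hinv]; exact hzM
    obtain ⟨-, τ, hτ, ⟨b1, hb1⟩, hτval⟩ := hz2
    have hτM : ∀ i, τ i ∈ M s' := fun i => (hτval i).1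
    set ρ : ℤ → X := fun n => if n ≤ a1 then σ n else τ (n - a1 + b1) with hρdef
    have hρ : F.IsSolIn Set.univ ρ := F.splice_sol hσ hτ (ha1.trans hb1.symm)
    have hαρ : F.alphaIn Set.univ ρ ⊆ M t' := by
      rw [F.alpha_eq_of_eventually (T := a1) (fun n hn => if_pos hn)]
      exact hασ
    have hωρ : F.omegaIn Set.univ ρ ⊆ M s' := by
      intro w hw
      have h1 := F.omega_subset ρ (a1 + 1) hw
      have h2 := F.invPart_subset _ _ h1
      refine F.compat_subset (F.invariant_compat hinv) ?_ h2
      rintro v ⟨i, hi, rfl⟩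
      simp only [Set.mem_setOf_eq] at hi
      show (if i ≤ a1 then σ i else τ (i - a1 + b1)) ∈ M s'
      rw [if_neg (by omega : ¬ i ≤ a1)]
      exact hτM _
    obtain ⟨w, hw⟩ := F.omega_nonempty hρ
    obtain ⟨z2, hz2'⟩ := F.alpha_nonempty hρ
    obtain ⟨u, u', huu', hαρ', hωρ'⟩ := hax4 ρ hρ
    have ht'u' : u' = t' := by
      by_contra hne
      exact Set.disjoint_left.mp (hdisj u' t' hne) (hαρ' hz2') (hαρ hz2')
    have hus : u = s' := by
      by_contra hne
      exact Set.disjoint_left.mp (hdisj u s' hne) (hωρ' hw) (hωρ hw)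
    have hs'I : s' ∈ I := hI s' t' (hus ▸ ht'u' ▸ huu') ht'I
    have hsI : s ∈ I := hI s s' hss' hs'I
    simp only [MVField.MorseSetIn, MVField.ConnIn, Set.mem_iUnion, Set.mem_setOf_eq]
    exact ⟨s, hsI, s', hs'I, ψ, hψ, ⟨a, ha⟩, hα, hω⟩
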